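/- arXiv:2107.06609 — 2 statements merged into one kernel-verified Lean document; each statement's English description precedes it below -/
import Mathlib

section
/- Let φ = (𝔨_1 ⊊ ⋯ ⊊ 𝔨_r) be a flag and let A ∈ B[φ]. Then either A ∈ D(𝔨_r), or ker A = 𝔨_i for some 1 ≤ i ≤ r − 1. -/
open scoped RealInnerProductSpace Classical
open Module Set Filter

/-- A Lie bracket on a real inner product space for which every adjoint map
`ad X : y ↦ ⁅X, y⁆` is skew-adjoint with respect to the inner product; this is the
Lie-algebraic model of a compact Lie group with a biinvariant metric. -/
structure CompactLieBracket (L : Type*) [NormedAddCommGroup L] [InnerProductSpace ℝ L] where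
  br : L →ₗ[ℝ] L →ₗ[ℝ] L
  br_self : ∀ x : L, br x x = 0
  jacobi : ∀ x y z : L, br x (br y z) + br y (br z x) + br z (br x y) = 0
  skew : ∀ x y z : L, ⟪br x y, z⟫ = ⟪x, br y z⟫

variable {L : Type*} [NormedAddCommGroup L] [InnerProductSpace ℝ L] [FiniteDimensional ℝ L]
variable (𝔩 : CompactLieBracket L) (H : Submodule ℝ L)

/-- `K` is a Lie subalgebra of `(L, 𝔩.br)`. -/
def IsLieSub (K : Submodule ℝ L) : Prop := ∀ x ∈ K, ∀ y ∈ K, 𝔩.br x y ∈ K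

/-- The disk `D(𝔨)`, with the convention `D(𝔤) = ∅`. -/
noncomputable def disk (K : Submodule ℝ L) : Set (L →L[ℝ] L) :=
  if K = ⊤ then ∅ else
    { A | (∀ x y : L, ⟪A x, y⟫ = ⟪x, A y⟫) ∧
          (∀ Z ∈ H, ∀ y : L, A (𝔩.br Z y) = 𝔩.br Z (A y)) ∧
          (∀ x : L, 0 ≤ ⟪A x, x⟫) ∧
          (∀ x ∈ K, A x = 0) ∧
          LinearMap.trace ℝ L (A : L →ₗ[ℝ] L) = 1 ∧
          (∀ X ∈ K, ∀ y : L, A (𝔩.br X y) = 𝔩.br X (A y)) }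

/-- The orthogonal projection of `L` onto `K`, as an endomorphism of `L`. -/
noncomputable def projL (K : Submodule ℝ L) : L →L[ℝ] L :=
  K.subtypeL.comp K.orthogonalProjectionOnto

/-- The endomorphism `A^𝔨 = (dim 𝔤 - dim 𝔨)⁻¹ • (id - π_𝔨)`. -/
noncomputable def Apt (K : Submodule ℝ L) : L →L[ℝ] L :=
  ((finrank ℝ L : ℝ) - (finrank ℝ ↥K : ℝ))⁻¹ • (ContinuousLinearMap.id ℝ L - projL K)

/-- The join `X ∗ Y` of two subsets, with the convention `X ∗ ∅ = X`. -/
noncomputable def join (X Y : Set (L →L[ℝ] L)) : Set (L →L[ℝ] L) :=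
  if Y = ∅ then X
  else { z | ∃ x ∈ X, ∃ y ∈ Y, ∃ t : ℝ, t ∈ Icc (0 : ℝ) 1 ∧ z = (1 - t) • x + t • y }

/-- A flag: a nonempty chain of subalgebras, each strictly containing `𝔥`. -/
def IsFlag (s : Finset (Submodule ℝ L)) : Prop :=
  s.Nonempty ∧ IsChain (· ≤ ·) (s : Set (Submodule ℝ L)) ∧ ∀ K ∈ s, IsLieSub 𝔩 K ∧ H < K

/-- The maximum `max φ` of a flag. -/
noncomputable def flagMax (s : Finset (Submodule ℝ L)) : Submodule ℝ L :=
  sSup (s : Set (Submodule ℝ L))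

/-- The butterfly `B[φ]` of a flag `φ`. -/
noncomputable def butterfly (s : Finset (Submodule ℝ L)) : Set (L →L[ℝ] L) :=
  if s.card = 1 then disk 𝔩 H (flagMax s)
  else join (convexHull ℝ (Apt '' (↑(s.erase (flagMax s)) : Set (Submodule ℝ L))))
      (disk 𝔩 H (flagMax s))

lemma apt_apply (K : Submodule ℝ L) (v : L) :
    Apt K v = ((finrank ℝ L : ℝ) - (finrank ℝ ↥K : ℝ))⁻¹ • (v - (K.orthogonalProjectionOnto v : L)) := by
  simp [Apt, projL, ContinuousLinearMap.smul_apply, ContinuousLinearMap.sub_apply]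

lemma coef_pos {K : Submodule ℝ L} (hK : K ≠ ⊤) :
    0 < ((finrank ℝ L : ℝ) - (finrank ℝ ↥K : ℝ))⁻¹ := by
  have := Submodule.finrank_lt (K := ℝ) (V := L) hK
  have : (finrank ℝ ↥K : ℝ) < (finrank ℝ L : ℝ) := by exact_mod_cast this
  have : 0 < (finrank ℝ L : ℝ) - (finrank ℝ ↥K : ℝ) := by linarith
  positivity

lemma inner_sub_proj (K : Submodule ℝ L) (v : L) :
    ⟪v - (K.orthogonalProjectionOnto v : L), v⟫ = ‖v - (K.orthogonalProjectionOnto v : L)‖ ^ 2 := by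
  set p := (K.orthogonalProjectionOnto v : L) with hp
  have ho : v - p ∈ Kᗮ := Submodule.sub_starProjection_mem_orthogonal (K := K) v
  have h0 : ⟪p, v - p⟫ = 0 := (Submodule.mem_orthogonal K (v - p)).mp ho p (SetLike.coe_mem _)
  have h0' : ⟪v - p, p⟫ = 0 := by rw [real_inner_comm]; exact h0
  have : ⟪v - p, v⟫ = ⟪v - p, v - p⟫ + ⟪v - p, p⟫ := by
    rw [← inner_add_right, sub_add_cancel]
  rw [this, h0', add_zero, real_inner_self_eq_norm_sq]

lemma apt_inner_nonneg {K : Submodule ℝ L} (hK : K ≠ ⊤) (v : L) : 0 ≤ ⟪Apt K v, v⟫ := by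
  rw [apt_apply, real_inner_smul_left, inner_sub_proj]
  have := (coef_pos hK).le
  positivity

lemma apt_inner_eq_zero {K : Submodule ℝ L} (hK : K ≠ ⊤) {v : L}
    (h : ⟪Apt K v, v⟫ = 0) : v ∈ K := by
  rw [apt_apply, real_inner_smul_left, inner_sub_proj] at h
  have hc := coef_pos (L := L) hK
  have : ‖v - (K.orthogonalProjectionOnto v : L)‖ ^ 2 = 0 := by
    rcases mul_eq_zero.mp h with h' | h'
    · exact absurd h' hc.ne'
    · exact h'
  have : v - (K.orthogonalProjectionOnto v : L) = 0 := by
    rwa [pow_eq_zero_iff (by norm_num), norm_eq_zero] at this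
  have : (K.orthogonalProjectionOnto v : L) = v := by have := sub_eq_zero.mp this; exact this.symm
  exact Submodule.starProjection_eq_self_iff.mp this

lemma apt_apply_mem {K : Submodule ℝ L} {v : L} (hv : v ∈ K) : Apt K v = 0 := by
  rw [apt_apply, Submodule.coe_orthogonalProjectionOnto_apply, Submodule.starProjection_eq_self_iff.mpr hv, sub_self, smul_zero]

lemma core_kernel {s : Finset (Submodule ℝ L)}
    (hchain : IsChain (· ≤ ·) (s : Set (Submodule ℝ L))) {M : Submodule ℝ L}
    (A y : L →L[ℝ] L) (c₀ : ℝ) (hc₀ : 0 ≤ c₀)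
    (hy0 : ∀ v ∈ M, y v = 0) (hypos : ∀ v : L, 0 ≤ ⟪y v, v⟫)
    {ι : Type} (t : Finset ι) (w : ι → ℝ) (K : ι → Submodule ℝ L)
    (hw : ∀ i ∈ t, 0 ≤ w i) (hwsum : 0 < ∑ i ∈ t, w i)
    (hKs : ∀ i ∈ t, K i ∈ s.erase M)
    (hKM : ∀ i ∈ t, K i ≤ M)
    (hAeq : A = c₀ • y + ∑ i ∈ t, w i • Apt (K i)) :
    ∃ Km ∈ s.erase M, LinearMap.ker (A : L →ₗ[ℝ] L) = Km := by
  -- each K i is proper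
  have hKtop : ∀ i ∈ t, K i ≠ ⊤ := by
    intro i hi h
    have h1 := Finset.mem_erase.mp (hKs i hi)
    have hM : M = ⊤ := top_le_iff.mp (h ▸ hKM i hi)
    exact h1.1 (h.trans hM.symm)
  -- support
  set T := t.filter (fun i => 0 < w i) with hT
  have hTne : T.Nonempty := by
    by_contra h
    rw [Finset.not_nonempty_iff_eq_empty] at h
    have : ∑ i ∈ t, w i = 0 := by
      apply Finset.sum_eq_zero
      intro i hi
      by_contra hwi
      have : i ∈ T := Finset.mem_filter.mpr ⟨hi, lt_of_le_of_ne (hw i hi) (Ne.symm hwi)⟩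
      simp [h] at this
    exact absurd this hwsum.ne'
  -- minimal element of the image
  obtain ⟨Km, hKmmem, hKmmin⟩ := (T.image K).exists_minimal (hTne.image K)
  obtain ⟨i₀, hi₀T, hKi₀⟩ := Finset.mem_image.mp hKmmem
  have hi₀t : i₀ ∈ t := (Finset.mem_filter.mp hi₀T).1
  have hwi₀ : 0 < w i₀ := (Finset.mem_filter.mp hi₀T).2
  have hmin : ∀ i ∈ T, Km ≤ K i := by
    intro i hiT
    have hit : i ∈ t := (Finset.mem_filter.mp hiT).1
    by_cases he : K i = Km
    · exact he.ge
    · rcases hchain (Finset.mem_coe.mpr ((Finset.mem_erase.mp (hKs i hit)).2))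
        (Finset.mem_coe.mpr ((Finset.mem_erase.mp (hKs i₀ hi₀t)).2)) (fun h => he (h.trans hKi₀)) with h | h
      · exact absurd (lt_of_le_of_ne (hKi₀ ▸ h) he) (fun hlt => lt_irrefl _ (lt_of_lt_of_le hlt (hKmmin (Finset.mem_image_of_mem K hiT) hlt.le)))
      · exact hKi₀ ▸ h
  refine ⟨Km, hKi₀ ▸ hKs i₀ hi₀t, ?_⟩
  ext v
  simp only [LinearMap.mem_ker, ContinuousLinearMap.coe_coe]
  constructor
  · intro hv
    have hv' : A v = 0 := hv
    have hinner : ⟪A v, v⟫ = 0 := by rw [hv']; simp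
    have hexp : ⟪A v, v⟫ = c₀ * ⟪y v, v⟫ + ∑ i ∈ t, w i * ⟪Apt (K i) v, v⟫ := by
      rw [hAeq]
      simp only [ContinuousLinearMap.add_apply, ContinuousLinearMap.smul_apply,
        ContinuousLinearMap.sum_apply, inner_add_left, real_inner_smul_left, sum_inner]
    have hterm : ∀ i ∈ t, 0 ≤ w i * ⟪Apt (K i) v, v⟫ :=
      fun i hi => mul_nonneg (hw i hi) (apt_inner_nonneg (hKtop i hi) v)
    have hsum0 : ∑ i ∈ t, w i * ⟪Apt (K i) v, v⟫ = 0 := by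
      have h1 : 0 ≤ c₀ * ⟪y v, v⟫ := mul_nonneg hc₀ (hypos v)
      have h2 : 0 ≤ ∑ i ∈ t, w i * ⟪Apt (K i) v, v⟫ := Finset.sum_nonneg hterm
      linarith [hexp ▸ hinner]
    have := (Finset.sum_eq_zero_iff_of_nonneg hterm).mp hsum0 i₀ hi₀t
    have h0 : ⟪Apt (K i₀) v, v⟫ = 0 := by
      rcases mul_eq_zero.mp this with h | h
      · exact absurd h hwi₀.ne'
      · exact h
    exact hKi₀ ▸ apt_inner_eq_zero (hKtop i₀ hi₀t) h0
  · intro hv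
    rw [hAeq]
    simp only [ContinuousLinearMap.add_apply, ContinuousLinearMap.smul_apply,
      ContinuousLinearMap.sum_apply]
    have hyv : y v = 0 := hy0 v (hKM i₀ hi₀t (hKi₀ ▸ hv))
    rw [hyv, smul_zero, zero_add]
    apply Finset.sum_eq_zero
    intro i hi
    by_cases hiT : i ∈ T
    · rw [apt_apply_mem (hmin i hiT (hKi₀ ▸ hv)), smul_zero]
    · have : w i = 0 := by
        by_contra h
        exact hiT (Finset.mem_filter.mpr ⟨hi, lt_of_le_of_ne (hw i hi) (Ne.symm h)⟩)
      rw [this, zero_smul]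

lemma hull_rep {s : Finset (Submodule ℝ L)} {M : Submodule ℝ L} {x : L →L[ℝ] L}
    (hx : x ∈ convexHull ℝ (Apt '' ((s.erase M : Finset (Submodule ℝ L)) : Set (Submodule ℝ L)))) :
    ∃ (ι : Type) (t : Finset ι) (w : ι → ℝ) (K : ι → Submodule ℝ L),
      (∀ i ∈ t, 0 ≤ w i) ∧ ∑ i ∈ t, w i = 1 ∧ (∀ i ∈ t, K i ∈ s.erase M) ∧
      x = ∑ i ∈ t, w i • Apt (K i) := by
  rw [convexHull_eq] at hx
  obtain ⟨ι, t, w, z, hw, hwsum, hz, hcm⟩ := hx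
  have hz' : ∀ i : ι, ∃ Ki : Submodule ℝ L, i ∈ t → Ki ∈ s.erase M ∧ Apt Ki = z i := by
    intro i
    by_cases hi : i ∈ t
    · obtain ⟨Ki, hKi, hAKi⟩ := hz i hi
      exact ⟨Ki, fun _ => ⟨Finset.mem_coe.mp hKi, hAKi⟩⟩
    · exact ⟨⊥, fun h => absurd h hi⟩
  choose K hK using hz'
  refine ⟨ι, t, w, K, hw, hwsum, fun i hi => (hK i hi).1, ?_⟩
  rw [← hcm, Finset.centerMass_eq_of_sum_1 _ _ hwsum]
  exact Finset.sum_congr rfl (fun i hi => by rw [(hK i hi).2])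


-- STATEMENT 4
theorem butterfly_mem_kernel
    (hH : IsLieSub 𝔩 H) (hprop : H ≠ ⊤)
    (s : Finset (Submodule ℝ L)) (hs : IsFlag 𝔩 H s)
    (A : L →L[ℝ] L) (hA : A ∈ butterfly 𝔩 H s) :
    A ∈ disk 𝔩 H (flagMax s) ∨ ∃ K ∈ s, K ≠ flagMax s ∧ LinearMap.ker (A : L →ₗ[ℝ] L) = K := by
  classical
  set M := flagMax s with hMdef
  have hchain := hs.2.1
  have hle : ∀ K ∈ s, K ≤ M := fun K hK => le_sSup (Finset.mem_coe.mpr hK)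
  by_cases hcard : s.card = 1
  · left
    rw [butterfly, if_pos hcard] at hA
    exact hA
  · rw [butterfly, if_neg hcard] at hA
    by_cases hD : disk 𝔩 H M = ∅
    · rw [_root_.join, if_pos hD] at hA
      obtain ⟨ι, t, w, K, hw, hwsum, hKs, hxeq⟩ := hull_rep hA
      have hKM : ∀ i ∈ t, K i ≤ M := fun i hi => hle _ (Finset.mem_of_mem_erase (hKs i hi))
      obtain ⟨Km, hKm, hker⟩ := core_kernel hchain A (0 : L →L[ℝ] L) 0 le_rfl
        (fun v _ => rfl) (fun v => by simp) t w K hw (by rw [hwsum]; exact one_pos)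
        hKs hKM (by rw [smul_zero, zero_add]; exact hxeq)
      exact Or.inr ⟨Km, Finset.mem_of_mem_erase hKm, (Finset.mem_erase.mp hKm).1, hker⟩
    · rw [_root_.join, if_neg hD] at hA
      obtain ⟨x, hx, y, hy, t₀, ht₀, hAe⟩ := hA
      have hMtop : M ≠ ⊤ := by
        intro h
        rw [disk, if_pos h] at hD
        exact hD rfl
      have hy' := hy
      rw [disk, if_neg hMtop] at hy'
      obtain ⟨-, -, hypos, hy0, -, -⟩ := hy'
      by_cases ht1 : t₀ = 1
      · left
        rw [hAe, ht1]
        simpa using hy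
      · have ht₀lt : t₀ < 1 := lt_of_le_of_ne ht₀.2 ht1
        obtain ⟨ι, t, w, K, hw, hwsum, hKs, hxeq⟩ := hull_rep hx
        have hKM : ∀ i ∈ t, K i ≤ M := fun i hi => hle _ (Finset.mem_of_mem_erase (hKs i hi))
        have hAeq : A = t₀ • y + ∑ i ∈ t, ((1 - t₀) * w i) • Apt (K i) := by
          rw [hAe, hxeq, Finset.smul_sum, add_comm]
          congr 1
          exact Finset.sum_congr rfl (fun i hi => by rw [smul_smul])
        obtain ⟨Km, hKm, hker⟩ := core_kernel hchain A y t₀ ht₀.1 hy0 hypos t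
          (fun i => (1 - t₀) * w i) K
          (fun i hi => mul_nonneg (by linarith) (hw i hi))
          (by rw [← Finset.mul_sum, hwsum, mul_one]; linarith)
          hKs hKM hAeq
        exact Or.inr ⟨Km, Finset.mem_of_mem_erase hKm, (Finset.mem_erase.mp hKm).1, hker⟩
end

section
/- Let φ, ψ be flags with φ < ψ. Then B[ψ] ⊆ B[φ]; if moreover ψ is a proper flag, then B[ψ] ⊊ B[φ]. -/
open scoped RealInnerProductSpace Classical
open Module Set Filter

variable {L : Type*} [NormedAddCommGroup L] [InnerProductSpace ℝ L] [FiniteDimensional ℝ L]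
variable (𝔩 : CompactLieBracket L) (H : Submodule ℝ L)

/-- An elementary move between flags: either adjoin a new maximum, or delete a
non-maximal member. -/
def FlagStep (s t : Finset (Submodule ℝ L)) : Prop :=
  IsFlag 𝔩 H s ∧ IsFlag 𝔩 H t ∧
    ((∃ K : Submodule ℝ L, flagMax s < K ∧ t = insert K s) ∨
      (∃ K ∈ s, K ≠ flagMax s ∧ t = s.erase K))

/-- The partial order `φ ≤ ψ` on flags: equality or a finite chain of elementary moves. -/
def FlagLE (s t : Finset (Submodule ℝ L)) : Prop :=
  Relation.ReflTransGen (FlagStep 𝔩 H) s t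

-- ### projL basics

lemma projL_mem (K : Submodule ℝ L) (x : L) : projL K x ∈ K := by
  simp [projL]

lemma projL_eq_self {K : Submodule ℝ L} {x : L} (h : x ∈ K) : projL K x = x := by
  simpa [projL] using congrArg Subtype.val
    (Submodule.orthogonalProjectionOnto_mem_subspace_eq_self (K := K) ⟨x, h⟩)

lemma projL_eq_zero {K : Submodule ℝ L} {x : L} (h : x ∈ Kᗮ) : projL K x = 0 := by
  simpa [projL] using congrArg Subtype.val
    (Submodule.orthogonalProjectionOnto_apply_of_mem_orthogonal (K := K) h)

lemma sub_projL_mem_orthogonal (K : Submodule ℝ L) (x : L) : x - projL K x ∈ Kᗮ :=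
  Submodule.sub_starProjection_mem_orthogonal (K := K) x

lemma inner_sub_projL (K : Submodule ℝ L) (x : L) {z : L} (hz : z ∈ K) :
    ⟪x - projL K x, z⟫ = 0 := by
  rw [real_inner_comm]; exact (sub_projL_mem_orthogonal K x) z hz

lemma projL_sa (K : Submodule ℝ L) (x y : L) : ⟪projL K x, y⟫ = ⟪x, projL K y⟫ := by
  exact Submodule.inner_starProjection_left_eq_right (K := K) x y

lemma trace_projL (K : Submodule ℝ L) :
    LinearMap.trace ℝ L ((projL K : L →L[ℝ] L) : L →ₗ[ℝ] L) = (finrank ℝ K : ℝ) := by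
  have h1 : ((projL K : L →L[ℝ] L) : L →ₗ[ℝ] L)
      = (K.subtype) ∘ₗ ((K.orthogonalProjectionOnto : L →L[ℝ] K) : L →ₗ[ℝ] K) := rfl
  rw [h1, LinearMap.trace_comp_comm']
  have h2 : ((K.orthogonalProjectionOnto : L →L[ℝ] K) : L →ₗ[ℝ] K) ∘ₗ K.subtype = LinearMap.id := by
    ext x
    exact congrArg Subtype.val (Submodule.orthogonalProjectionOnto_mem_subspace_eq_self (K := K) x)
  rw [h2, LinearMap.trace_id]

-- ### bracket basics

lemma br_antisymm (x y : L) : 𝔩.br x y = - 𝔩.br y x := by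
  have h := 𝔩.br_self (x + y)
  have hx := 𝔩.br_self x
  have hy := 𝔩.br_self y
  simp only [map_add, LinearMap.add_apply] at h
  rw [hx, hy] at h
  abel_nf at h ⊢
  linear_combination (norm := abel) h

lemma br_mem_orthogonal {K : Submodule ℝ L} (hK : IsLieSub 𝔩 K) {X q : L}
    (hX : X ∈ K) (hq : q ∈ Kᗮ) : 𝔩.br X q ∈ Kᗮ := by
  intro z hz
  have h1 : ⟪𝔩.br X q, z⟫ = ⟪X, 𝔩.br q z⟫ := 𝔩.skew X q z
  have h2 : ⟪𝔩.br X z, q⟫ = ⟪X, 𝔩.br z q⟫ := 𝔩.skew X z q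
  have h3 : 𝔩.br q z = - 𝔩.br z q := br_antisymm 𝔩 q z
  have h4 : ⟪𝔩.br X z, q⟫ = 0 := hq _ (hK X hX z hz)
  rw [real_inner_comm]
  rw [h3, inner_neg_right, ← h2, h4] at h1
  simpa using h1

lemma projL_comm_ad {K : Submodule ℝ L} (hK : IsLieSub 𝔩 K) {X : L} (hX : X ∈ K) (y : L) :
    projL K (𝔩.br X y) = 𝔩.br X (projL K y) := by
  have hdec : y = projL K y + (y - projL K y) := by abel
  have h1 : projL K (𝔩.br X (projL K y)) = 𝔩.br X (projL K y) :=
    projL_eq_self (hK X hX _ (projL_mem K y))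
  have h2 : projL K (𝔩.br X (y - projL K y)) = 0 :=
    projL_eq_zero (br_mem_orthogonal 𝔩 hK hX (sub_projL_mem_orthogonal K y))
  calc projL K (𝔩.br X y)
      = projL K (𝔩.br X (projL K y + (y - projL K y))) := by rw [← hdec]
    _ = projL K (𝔩.br X (projL K y)) + projL K (𝔩.br X (y - projL K y)) := by
        rw [map_add, map_add]
    _ = 𝔩.br X (projL K y) := by rw [h1, h2, add_zero]
-- ### disk basics

lemma disk_eq_empty_of_top : disk 𝔩 H (⊤ : Submodule ℝ L) = ∅ := by
  simp [disk]

lemma mem_disk_iff {K : Submodule ℝ L} (hK : K ≠ ⊤) {A : L →L[ℝ] L} :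
    A ∈ disk 𝔩 H K ↔
      ((∀ x y : L, ⟪A x, y⟫ = ⟪x, A y⟫) ∧
        (∀ Z ∈ H, ∀ y : L, A (𝔩.br Z y) = 𝔩.br Z (A y)) ∧
        (∀ x : L, 0 ≤ ⟪A x, x⟫) ∧
        (∀ x ∈ K, A x = 0) ∧
        LinearMap.trace ℝ L (A : L →ₗ[ℝ] L) = 1 ∧
        (∀ X ∈ K, ∀ y : L, A (𝔩.br X y) = 𝔩.br X (A y))) := by
  rw [disk, if_neg hK]; rfl

lemma disk_antitone {K K' : Submodule ℝ L} (h : K' ≤ K) : disk 𝔩 H K ⊆ disk 𝔩 H K' := by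
  by_cases hK : K = ⊤
  · rw [hK, disk_eq_empty_of_top]; exact empty_subset _
  have hK' : K' ≠ ⊤ := by
    rintro rfl
    exact hK (top_le_iff.1 h)
  intro A hA
  rw [mem_disk_iff 𝔩 H hK] at hA
  rw [mem_disk_iff 𝔩 H hK']
  obtain ⟨c1, c2, c3, c4, c5, c6⟩ := hA
  exact ⟨c1, c2, c3, fun x hx => c4 x (h hx), c5, fun X hX y => c6 X (h hX) y⟩

lemma disk_convex (K : Submodule ℝ L) : Convex ℝ (disk 𝔩 H K) := by
  by_cases hK : K = ⊤
  · rw [hK, disk_eq_empty_of_top]; exact convex_empty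
  intro A hA B hB a b ha hb hab
  rw [mem_disk_iff 𝔩 H hK] at hA hB ⊢
  obtain ⟨a1, a2, a3, a4, a5, a6⟩ := hA
  obtain ⟨b1, b2, b3, b4, b5, b6⟩ := hB
  have happ : ∀ x : L, (a • A + b • B) x = a • A x + b • B x := by intro x; rfl
  refine ⟨?_, ?_, ?_, ?_, ?_, ?_⟩
  · intro x y
    simp only [happ, inner_add_left, inner_add_right, real_inner_smul_left,
      real_inner_smul_right, a1 x y, b1 x y]
  · intro Z hZ y
    simp only [happ, a2 Z hZ y, b2 Z hZ y, map_smul, map_add]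
  · intro x
    simp only [happ, inner_add_left, real_inner_smul_left]
    exact add_nonneg (mul_nonneg ha (a3 x)) (mul_nonneg hb (b3 x))
  · intro x hx
    simp only [happ, a4 x hx, b4 x hx, smul_zero, add_zero]
  · have : ((a • A + b • B : L →L[ℝ] L) : L →ₗ[ℝ] L)
        = a • (A : L →ₗ[ℝ] L) + b • (B : L →ₗ[ℝ] L) := rfl
    rw [this, map_add, map_smul, map_smul, a5, b5, smul_eq_mul, smul_eq_mul,
      mul_one, mul_one, hab]
  · intro X hX y
    simp only [happ, a6 X hX y, b6 X hX y, map_smul, map_add]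

-- ### Apt basics

lemma Apt_apply (K : Submodule ℝ L) (x : L) :
    Apt K x = ((finrank ℝ L : ℝ) - (finrank ℝ ↥K : ℝ))⁻¹ • (x - projL K x) := rfl

lemma Apt_mem_disk {K K' : Submodule ℝ L} (hK : IsLieSub 𝔩 K) (hHK : H ≤ K)
    (hK'K : K' ≤ K) (hKtop : K ≠ ⊤) : Apt K ∈ disk 𝔩 H K' := by
  have hnm : finrank ℝ K < finrank ℝ L := Submodule.finrank_lt hKtop
  have hpos : (0 : ℝ) < (finrank ℝ L : ℝ) - (finrank ℝ ↥K : ℝ) := by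
    rw [sub_pos]; exact_mod_cast hnm
  set c : ℝ := ((finrank ℝ L : ℝ) - (finrank ℝ ↥K : ℝ))⁻¹ with hc
  have hcpos : 0 < c := inv_pos.2 hpos
  have hK'top : K' ≠ ⊤ := by rintro rfl; exact hKtop (top_le_iff.1 hK'K)
  rw [mem_disk_iff 𝔩 H hK'top]
  refine ⟨?_, ?_, ?_, ?_, ?_, ?_⟩
  · intro x y
    simp only [Apt_apply, real_inner_smul_left, real_inner_smul_right, inner_sub_left,
      inner_sub_right, projL_sa K x y]
  · intro Z hZ y
    simp only [Apt_apply, projL_comm_ad 𝔩 hK (hHK hZ), map_smul, map_sub]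
  · intro x
    have h0 : ⟪x - projL K x, projL K x⟫ = 0 := inner_sub_projL K x (projL_mem K x)
    have : ⟪x - projL K x, x⟫ = ⟪x - projL K x, x - projL K x⟫ := by
      have := inner_sub_right (𝕜 := ℝ) (x - projL K x) x (projL K x)
      linarith [this, h0]
    rw [Apt_apply, real_inner_smul_left, this]
    exact mul_nonneg hcpos.le real_inner_self_nonneg
  · intro x hx
    rw [Apt_apply, projL_eq_self (hK'K hx), sub_self, smul_zero]
  · have hcoe : ((Apt K : L →L[ℝ] L) : L →ₗ[ℝ] L)
        = c • (LinearMap.id - ((projL K : L →L[ℝ] L) : L →ₗ[ℝ] L)) := rfl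
    rw [hcoe, map_smul, map_sub, LinearMap.trace_id, trace_projL, smul_eq_mul]
    exact inv_mul_cancel₀ (ne_of_gt hpos)
  · intro X hX y
    simp only [Apt_apply, projL_comm_ad 𝔩 hK (hK'K hX), map_smul, map_sub]

lemma inner_projL_sub_projL {M K : Submodule ℝ L} (h : M ≤ K) (x : L) :
    ⟪projL K x - projL M x, x⟫ = ⟪projL K x - projL M x, projL K x - projL M x⟫ := by
  set a := projL M x with ha
  set b := projL K x with hb
  have haM : a ∈ M := projL_mem M x
  have hbK : b ∈ K := projL_mem K x
  have haK : a ∈ K := h haM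
  have h1 : ⟪x - b, b - a⟫ = 0 := inner_sub_projL K x (Submodule.sub_mem K hbK haK)
  have h2 : ⟪x - a, a⟫ = 0 := inner_sub_projL M x haM
  have hba : ⟪b, a⟫ = ⟪x, a⟫ := by
    rw [hb, projL_sa K x a, projL_eq_self haK]
  have e1 := inner_sub_left (𝕜 := ℝ) x b (b - a)
  have e2 := inner_sub_left (𝕜 := ℝ) x a a
  have e3 := inner_sub_right (𝕜 := ℝ) (b - a) b a
  have e4 := inner_sub_left (𝕜 := ℝ) b a x
  have e5 := inner_sub_left (𝕜 := ℝ) b a a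
  have e6 := inner_sub_left (𝕜 := ℝ) b a b
  have hcomm1 : ⟪b - a, x⟫ = ⟪x, b - a⟫ := real_inner_comm _ _
  have hcomm2 : ⟪b, b - a⟫ = ⟪b - a, b⟫ := real_inner_comm _ _
  have hcomm3 : ⟪a, x⟫ = ⟪x, a⟫ := real_inner_comm _ _
  have hcomm4 : ⟪a, a⟫ = ⟪a, a⟫ := rfl
  have hab' : ⟪a, b⟫ = ⟪b, a⟫ := real_inner_comm _ _
  linarith [e1, e2, e3, e4, e5, e6, h1, h2, hba, hcomm1, hcomm2, hcomm3, hab']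

lemma smul_projL_sub_mem_disk {M K : Submodule ℝ L} (hM : IsLieSub 𝔩 M) (hK : IsLieSub 𝔩 K)
    (hHM : H ≤ M) (hMK : M < K) :
    ((finrank ℝ ↥K : ℝ) - (finrank ℝ ↥M : ℝ))⁻¹ • (projL K - projL M) ∈ disk 𝔩 H M := by
  have hMtop : M ≠ ⊤ := hMK.ne_top
  have hnm : finrank ℝ M < finrank ℝ K := Submodule.finrank_lt_finrank_of_lt hMK
  have hpos : (0 : ℝ) < (finrank ℝ ↥K : ℝ) - (finrank ℝ ↥M : ℝ) := by
    rw [sub_pos]; exact_mod_cast hnm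
  set c : ℝ := ((finrank ℝ ↥K : ℝ) - (finrank ℝ ↥M : ℝ))⁻¹ with hc
  have hcpos : 0 < c := inv_pos.2 hpos
  have hMK' : M ≤ K := hMK.le
  have happ : ∀ x : L, (c • (projL K - projL M)) x = c • (projL K x - projL M x) := by
    intro x; rfl
  rw [mem_disk_iff 𝔩 H hMtop]
  refine ⟨?_, ?_, ?_, ?_, ?_, ?_⟩
  · intro x y
    simp only [happ, real_inner_smul_left, real_inner_smul_right, inner_sub_left,
      inner_sub_right, projL_sa K x y, projL_sa M x y]
  · intro Z hZ y
    simp only [happ, projL_comm_ad 𝔩 hK (hMK' (hHM hZ)), projL_comm_ad 𝔩 hM (hHM hZ),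
      map_smul, map_sub]
  · intro x
    rw [happ, real_inner_smul_left, inner_projL_sub_projL hMK' x]
    exact mul_nonneg hcpos.le real_inner_self_nonneg
  · intro x hx
    rw [happ, projL_eq_self (hMK' hx), projL_eq_self hx, sub_self, smul_zero]
  · have hcoe : ((c • (projL K - projL M) : L →L[ℝ] L) : L →ₗ[ℝ] L)
        = c • (((projL K : L →L[ℝ] L) : L →ₗ[ℝ] L) - ((projL M : L →L[ℝ] L) : L →ₗ[ℝ] L)) := rfl
    rw [hcoe, map_smul, map_sub, trace_projL, trace_projL, smul_eq_mul]
    exact inv_mul_cancel₀ (ne_of_gt hpos)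
  · intro X hX y
    simp only [happ, projL_comm_ad 𝔩 hK (hMK' hX), projL_comm_ad 𝔩 hM hX, map_smul, map_sub]
-- ### flagMax basics

lemma flagMax_spec {s : Finset (Submodule ℝ L)} (hne : s.Nonempty)
    (hchain : IsChain (· ≤ ·) (s : Set (Submodule ℝ L))) :
    flagMax s ∈ s ∧ ∀ k ∈ s, k ≤ flagMax s := by
  obtain ⟨M, hM, hmax⟩ := Set.Finite.exists_maximalFor id (↑s : Set (Submodule ℝ L))
    s.finite_toSet (by exact_mod_cast hne)
  have hub : ∀ k ∈ s, k ≤ M := by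
    intro k hk
    rcases eq_or_ne k M with rfl | hkM
    · exact le_rfl
    rcases hchain hk hM hkM with h | h
    · exact h
    · exact hmax hk h
  have hM' : flagMax (L := L) s = M := by
    apply le_antisymm
    · exact sSup_le (by exact_mod_cast hub)
    · exact le_sSup (by exact_mod_cast hM)
  rw [hM']
  exact ⟨hM, hub⟩

lemma flagMax_mem {s : Finset (Submodule ℝ L)} (hs : IsFlag 𝔩 H s) : flagMax s ∈ s :=
  (flagMax_spec hs.1 hs.2.1).1

lemma le_flagMax {s : Finset (Submodule ℝ L)} (hs : IsFlag 𝔩 H s) {k : Submodule ℝ L}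
    (hk : k ∈ s) : k ≤ flagMax s :=
  (flagMax_spec hs.1 hs.2.1).2 k hk

lemma flagMax_insert {s : Finset (Submodule ℝ L)} (hs : IsFlag 𝔩 H s) {K : Submodule ℝ L}
    (hK : flagMax s < K) : flagMax (insert K s) = K := by
  rw [flagMax, Finset.coe_insert, sSup_insert]
  exact sup_eq_left.2 (le_of_lt hK)

lemma not_mem_of_flagMax_lt {s : Finset (Submodule ℝ L)} (hs : IsFlag 𝔩 H s)
    {K : Submodule ℝ L} (hK : flagMax s < K) : K ∉ s := by
  intro hmem
  exact absurd (le_flagMax 𝔩 H hs hmem) (not_le_of_gt hK)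

lemma flagMax_erase {s : Finset (Submodule ℝ L)} (hs : IsFlag 𝔩 H s) {K : Submodule ℝ L}
    (hK : K ∈ s) (hKM : K ≠ flagMax s) : flagMax (s.erase K) = flagMax s := by
  have hMmem : flagMax s ∈ s.erase K :=
    Finset.mem_erase.2 ⟨fun h => hKM h.symm, flagMax_mem 𝔩 H hs⟩
  apply le_antisymm
  · exact sSup_le fun k hk => le_flagMax 𝔩 H hs (Finset.mem_coe.1 (Finset.erase_subset K s hk))
  · exact le_sSup (by exact_mod_cast hMmem)

-- ### join basics

lemma mem_join {X Y : Set (L →L[ℝ] L)} {x y : L →L[ℝ] L} {t : ℝ}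
    (hx : x ∈ X) (hy : y ∈ Y) (ht : t ∈ Icc (0:ℝ) 1) : (1 - t) • x + t • y ∈ join X Y := by
  rw [_root_.join, if_neg (Set.nonempty_iff_ne_empty.1 ⟨y, hy⟩)]
  exact ⟨x, hx, y, hy, t, ht, rfl⟩

lemma subset_join_left {X Y : Set (L →L[ℝ] L)} : X ⊆ join X Y := by
  by_cases hY : Y = ∅
  · rw [_root_.join, if_pos hY]
  obtain ⟨y, hy⟩ := Set.nonempty_iff_ne_empty.2 hY
  intro x hx
  have : x = (1 - (0:ℝ)) • x + (0:ℝ) • y := by simp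
  rw [this]
  exact mem_join hx hy ⟨le_refl 0, zero_le_one⟩

lemma subset_join_right {X Y : Set (L →L[ℝ] L)} (hX : X.Nonempty) : Y ⊆ join X Y := by
  intro y hy
  obtain ⟨x, hx⟩ := hX
  have : y = (1 - (1:ℝ)) • x + (1:ℝ) • y := by simp
  rw [this]
  exact mem_join hx hy ⟨zero_le_one, le_refl 1⟩

lemma join_subset {X Y C : Set (L →L[ℝ] L)} (hC : Convex ℝ C) (hX : X ⊆ C) (hY : Y ⊆ C) :
    join X Y ⊆ C := by
  by_cases hYe : Y = ∅
  · rw [_root_.join, if_pos hYe]; exact hX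
  rw [_root_.join, if_neg hYe]
  rintro z ⟨x, hx, y, hy, t, ⟨ht0, ht1⟩, rfl⟩
  exact hC (hX hx) (hY hy) (by linarith) ht0 (by ring)

lemma join_mono {X X' Y Y' : Set (L →L[ℝ] L)} (hX : X ⊆ X') (hY : Y ⊆ Y')
    (hY'X' : Y' = ∅ → Y = ∅) : join X Y ⊆ join X' Y' := by
  by_cases hYe : Y = ∅
  · rw [_root_.join, if_pos hYe]
    exact hX.trans subset_join_left
  rw [_root_.join, if_neg hYe]
  rintro z ⟨x, hx, y, hy, t, ht, rfl⟩
  exact mem_join (hX hx) (hY hy) ht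
-- ### join convexity

lemma join_convex {X Y : Set (L →L[ℝ] L)} (hX : Convex ℝ X) (hY : Convex ℝ Y) :
    Convex ℝ (join X Y) := by
  by_cases hYe : Y = ∅
  · rw [_root_.join, if_pos hYe]; exact hX
  rw [_root_.join, if_neg hYe]
  rintro z₁ ⟨x₁, hx₁, y₁, hy₁, t₁, ⟨ht₁0, ht₁1⟩, rfl⟩ z₂
    ⟨x₂, hx₂, y₂, hy₂, t₂, ⟨ht₂0, ht₂1⟩, rfl⟩ a b ha hb hab
  set T := a * t₁ + b * t₂ with hT
  have hT0 : 0 ≤ T := add_nonneg (mul_nonneg ha ht₁0) (mul_nonneg hb ht₂0)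
  have hT1 : T ≤ 1 := by nlinarith
  rcases eq_or_lt_of_le hT0 with h0 | h0
  · -- T = 0
    have hat : a * t₁ = 0 := by nlinarith [mul_nonneg ha ht₁0, mul_nonneg hb ht₂0]
    have hbt : b * t₂ = 0 := by nlinarith [mul_nonneg ha ht₁0, mul_nonneg hb ht₂0]
    refine ⟨a • x₁ + b • x₂, hX hx₁ hx₂ ha hb hab, y₁, hy₁, 0, ⟨le_rfl, zero_le_one⟩, ?_⟩
    have h1 : a * (1 - t₁) = a := by nlinarith
    have h2 : b * (1 - t₂) = b := by nlinarith
    rw [smul_add, smul_add, smul_smul, smul_smul, smul_smul, smul_smul, hat, hbt, h1, h2]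
    simp
  rcases eq_or_lt_of_le hT1 with h1 | h1
  · -- T = 1
    have hsum : a * (1 - t₁) + b * (1 - t₂) = 0 := by nlinarith
    have hax : a * (1 - t₁) = 0 := by
      nlinarith [mul_nonneg ha (by linarith : (0:ℝ) ≤ 1 - t₁),
        mul_nonneg hb (by linarith : (0:ℝ) ≤ 1 - t₂)]
    have hbx : b * (1 - t₂) = 0 := by linarith
    refine ⟨x₁, hx₁, (a * t₁) • y₁ + (b * t₂) • y₂,
      hY hy₁ hy₂ (mul_nonneg ha ht₁0) (mul_nonneg hb ht₂0) (by rw [← hT, h1]),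
      1, ⟨zero_le_one, le_rfl⟩, ?_⟩
    match_scalars <;> nlinarith [hax, hbx]
  · -- 0 < T < 1
    have hT1' : (0:ℝ) < 1 - T := by linarith
    refine ⟨(a * (1 - t₁) / (1 - T)) • x₁ + (b * (1 - t₂) / (1 - T)) • x₂, ?_,
      (a * t₁ / T) • y₁ + (b * t₂ / T) • y₂, ?_, T, ⟨hT0, hT1⟩, ?_⟩
    · refine hX hx₁ hx₂ (div_nonneg (by nlinarith) hT1'.le)
        (div_nonneg (by nlinarith) hT1'.le) ?_
      rw [← add_div, div_eq_one_iff_eq hT1'.ne']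
      linear_combination hab
    · refine hY hy₁ hy₂ (div_nonneg (by nlinarith) h0.le)
        (div_nonneg (by nlinarith) h0.le) ?_
      rw [← add_div, div_eq_one_iff_eq (ne_of_gt h0)]
    · have c1 : (1 - T) * (a * (1 - t₁) / (1 - T)) = a * (1 - t₁) := by
        rw [mul_comm]; exact div_mul_cancel₀ _ hT1'.ne'
      have c2 : (1 - T) * (b * (1 - t₂) / (1 - T)) = b * (1 - t₂) := by
        rw [mul_comm]; exact div_mul_cancel₀ _ hT1'.ne'
      have c3 : T * (a * t₁ / T) = a * t₁ := by
        rw [mul_comm]; exact div_mul_cancel₀ _ (ne_of_gt h0)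
      have c4 : T * (b * t₂ / T) = b * t₂ := by
        rw [mul_comm]; exact div_mul_cancel₀ _ (ne_of_gt h0)
      rw [smul_add, smul_add, smul_smul, smul_smul, smul_smul, smul_smul, smul_add,
        smul_add, smul_smul, smul_smul, smul_smul, smul_smul, c1, c2, c3, c4]
      abel

-- ### butterfly basics

lemma butterfly_convex (s : Finset (Submodule ℝ L)) : Convex ℝ (butterfly 𝔩 H s) := by
  rw [butterfly]
  split
  · exact disk_convex 𝔩 H _
  · exact join_convex (convex_convexHull ℝ _) (disk_convex 𝔩 H _)

lemma disk_flagMax_subset_butterfly {s : Finset (Submodule ℝ L)} (hs : IsFlag 𝔩 H s) :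
    disk 𝔩 H (flagMax s) ⊆ butterfly 𝔩 H s := by
  by_cases hc : s.card = 1
  · rw [butterfly, if_pos hc]
  rw [butterfly, if_neg hc]
  have h2 : 1 < s.card := lt_of_le_of_ne (Finset.card_pos.2 hs.1) (Ne.symm hc)
  have herase : (s.erase (flagMax s)).Nonempty := by
    rw [← Finset.card_pos, Finset.card_erase_of_mem (flagMax_mem 𝔩 H hs)]
    omega
  obtain ⟨k₀, hk₀⟩ := herase
  exact subset_join_right ⟨Apt k₀, subset_convexHull ℝ _ (mem_image_of_mem _ hk₀)⟩

lemma Apt_mem_butterfly_of_ne {s : Finset (Submodule ℝ L)} (hs : IsFlag 𝔩 H s)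
    {k : Submodule ℝ L} (hk : k ∈ s) (hkM : k ≠ flagMax s) : Apt k ∈ butterfly 𝔩 H s := by
  have h2 : 1 < s.card :=
    Finset.one_lt_card.2 ⟨k, hk, flagMax s, flagMax_mem 𝔩 H hs, hkM⟩
  rw [butterfly, if_neg (by omega)]
  exact subset_join_left (subset_convexHull ℝ _
    (mem_image_of_mem _ (Finset.mem_erase.2 ⟨hkM, hk⟩)))

lemma Apt_mem_butterfly {s : Finset (Submodule ℝ L)} (hs : IsFlag 𝔩 H s)
    (hMtop : flagMax s ≠ ⊤) {k : Submodule ℝ L} (hk : k ∈ s) : Apt k ∈ butterfly 𝔩 H s := by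
  rcases eq_or_ne k (flagMax s) with rfl | hkM
  · exact disk_flagMax_subset_butterfly 𝔩 H hs
      (Apt_mem_disk 𝔩 H (hs.2.2 _ hk).1 (hs.2.2 _ hk).2.le le_rfl hMtop)
  · exact Apt_mem_butterfly_of_ne 𝔩 H hs hk hkM

lemma convexHull_Apt_subset_butterfly {s : Finset (Submodule ℝ L)} (hs : IsFlag 𝔩 H s)
    (hMtop : flagMax s ≠ ⊤) :
    convexHull ℝ (Apt '' (↑s : Set (Submodule ℝ L))) ⊆ butterfly 𝔩 H s := by
  refine convexHull_min ?_ (butterfly_convex 𝔩 H s)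
  rintro _ ⟨k, hk, rfl⟩
  exact Apt_mem_butterfly 𝔩 H hs hMtop (Finset.mem_coe.1 hk)

-- ### unit vectors

lemma exists_unit_sub {M K : Submodule ℝ L} (h : M < K) :
    ∃ v : L, v ∈ K ∧ v ∈ Mᗮ ∧ ⟪v, v⟫ = 1 := by
  obtain ⟨x, hxK, hxM⟩ := SetLike.exists_of_lt h
  have hv0 : x - projL M x ≠ 0 := by
    intro hz
    exact hxM (by rw [sub_eq_zero] at hz; rw [hz]; exact projL_mem M x)
  set v₀ := x - projL M x with hv₀
  refine ⟨‖v₀‖⁻¹ • v₀, ?_, ?_, ?_⟩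
  · exact Submodule.smul_mem K _ (Submodule.sub_mem K hxK (h.le (projL_mem M x)))
  · exact Submodule.smul_mem _ _ (sub_projL_mem_orthogonal M x)
  · have hn : ‖‖v₀‖⁻¹ • v₀‖ = 1 := by
      rw [norm_smul, norm_inv, norm_norm, inv_mul_cancel₀ (norm_ne_zero_iff.2 hv0)]
    rw [real_inner_self_eq_norm_mul_norm, hn, one_mul]
-- ### separating functionals

lemma convex_inner_le (v : L) (c : ℝ) : Convex ℝ {B : L →L[ℝ] L | ⟪B v, v⟫ ≤ c} := by
  intro B₁ h₁ B₂ h₂ a b ha hb hab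
  have happ : (a • B₁ + b • B₂) v = a • B₁ v + b • B₂ v := rfl
  simp only [mem_setOf_eq] at h₁ h₂ ⊢
  rw [happ, inner_add_left, real_inner_smul_left, real_inner_smul_left]
  have hc : a * c + b * c = c := by rw [← add_mul, hab, one_mul]
  nlinarith [mul_le_mul_of_nonneg_left h₁ ha, mul_le_mul_of_nonneg_left h₂ hb]

lemma convex_inner_eq (v w : L) : Convex ℝ {B : L →L[ℝ] L | ⟪B v, v⟫ = ⟪B w, w⟫} := by
  intro B₁ h₁ B₂ h₂ a b ha hb hab
  have happv : (a • B₁ + b • B₂) v = a • B₁ v + b • B₂ v := rfl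
  have happw : (a • B₁ + b • B₂) w = a • B₁ w + b • B₂ w := rfl
  simp only [mem_setOf_eq] at h₁ h₂ ⊢
  rw [happv, happw, inner_add_left, inner_add_left, real_inner_smul_left,
    real_inner_smul_left, real_inner_smul_left, real_inner_smul_left, h₁, h₂]

lemma disk_subset_inner_eq {M : Submodule ℝ L} {v w : L} (hv : v ∈ M) (hw : w ∈ M) :
    disk 𝔩 H M ⊆ {B : L →L[ℝ] L | ⟪B v, v⟫ = ⟪B w, w⟫} := by
  by_cases hM : M = ⊤
  · rw [hM, disk_eq_empty_of_top]; exact empty_subset _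
  intro y hy
  obtain ⟨-, -, -, h4, -, -⟩ := (mem_disk_iff 𝔩 H hM).1 hy
  simp only [mem_setOf_eq, h4 v hv, h4 w hw, inner_zero_left]

-- ### the elementary step lemmas

lemma flagStep_insert_subset {s : Finset (Submodule ℝ L)} {K : Submodule ℝ L}
    (hs : IsFlag 𝔩 H s) (hK : flagMax s < K) :
    butterfly 𝔩 H (insert K s) ⊆ butterfly 𝔩 H s := by
  have hMtop : flagMax s ≠ ⊤ := hK.ne_top
  have hKs : K ∉ s := not_mem_of_flagMax_lt 𝔩 H hs hK
  have hmax : flagMax (insert K s) = K := flagMax_insert 𝔩 H hs hK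
  have hcard : (insert K s).card ≠ 1 := by
    rw [Finset.card_insert_of_notMem hKs]
    have := Finset.card_pos.2 hs.1; omega
  rw [butterfly, if_neg hcard, hmax, Finset.erase_insert hKs]
  refine join_subset (butterfly_convex 𝔩 H s) (convexHull_Apt_subset_butterfly 𝔩 H hs hMtop) ?_
  exact (disk_antitone 𝔩 H hK.le).trans (disk_flagMax_subset_butterfly 𝔩 H hs)

lemma flagStep_erase_subset {s : Finset (Submodule ℝ L)} {K : Submodule ℝ L}
    (hs : IsFlag 𝔩 H s) (hK : K ∈ s) (hKM : K ≠ flagMax s) :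
    butterfly 𝔩 H (s.erase K) ⊆ butterfly 𝔩 H s := by
  have hmax : flagMax (s.erase K) = flagMax s := flagMax_erase 𝔩 H hs hK hKM
  by_cases hcard : (s.erase K).card = 1
  · rw [butterfly, if_pos hcard, hmax]
    exact disk_flagMax_subset_butterfly 𝔩 H hs
  · rw [butterfly, if_neg hcard, hmax]
    have hscard : s.card ≠ 1 := by
      have h2 : 1 < s.card := Finset.one_lt_card.2 ⟨K, hK, flagMax s, flagMax_mem 𝔩 H hs, hKM⟩
      omega
    rw [butterfly, if_neg hscard]
    refine join_mono (convexHull_mono (Set.image_mono ?_)) subset_rfl (fun h => h)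
    exact_mod_cast Finset.erase_subset_erase _ (Finset.erase_subset _ _)

lemma flagStep_insert_strict {s : Finset (Submodule ℝ L)} {K : Submodule ℝ L}
    (hs : IsFlag 𝔩 H s) (ht : IsFlag 𝔩 H (insert K s)) (hK : flagMax s < K) (hKtop : K ≠ ⊤) :
    ∃ W, W ∈ butterfly 𝔩 H s ∧ W ∉ butterfly 𝔩 H (insert K s) := by
  set M := flagMax s with hM
  have hMmem : M ∈ s := flagMax_mem 𝔩 H hs
  have hMlie : IsLieSub 𝔩 M := (hs.2.2 M hMmem).1
  have hHM : H ≤ M := (hs.2.2 M hMmem).2.le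
  have hKlie : IsLieSub 𝔩 K := (ht.2.2 K (Finset.mem_insert_self K s)).1
  set W : L →L[ℝ] L := ((finrank ℝ ↥K : ℝ) - (finrank ℝ ↥M : ℝ))⁻¹ • (projL K - projL M)
    with hW
  have hWdisk : W ∈ disk 𝔩 H M := smul_projL_sub_mem_disk 𝔩 H hMlie hKlie hHM hK
  refine ⟨W, disk_flagMax_subset_butterfly 𝔩 H hs hWdisk, ?_⟩
  have hnMK : finrank ℝ M < finrank ℝ K := Submodule.finrank_lt_finrank_of_lt hK
  have hnKL : finrank ℝ K < finrank ℝ L := Submodule.finrank_lt hKtop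
  set cstar : ℝ := ((finrank ℝ L : ℝ) - (finrank ℝ ↥M : ℝ))⁻¹ with hcstar
  have hden : (0:ℝ) < (finrank ℝ L : ℝ) - (finrank ℝ ↥M : ℝ) := by
    rw [sub_pos]; exact_mod_cast lt_trans hnMK hnKL
  have hcsp : 0 < cstar := inv_pos.2 hden
  obtain ⟨v, hvK, hvM, hvv⟩ := exists_unit_sub hK
  have hKs : K ∉ s := not_mem_of_flagMax_lt 𝔩 H hs hK
  have hmax : flagMax (insert K s) = K := flagMax_insert 𝔩 H hs hK
  have hcard : (insert K s).card ≠ 1 := by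
    rw [Finset.card_insert_of_notMem hKs]
    have := Finset.card_pos.2 hs.1; omega
  have hsub : butterfly 𝔩 H (insert K s) ⊆ {B : L →L[ℝ] L | ⟪B v, v⟫ ≤ cstar} := by
    rw [butterfly, if_neg hcard, hmax, Finset.erase_insert hKs]
    refine join_subset (convex_inner_le v cstar) ?_ ?_
    · refine convexHull_min ?_ (convex_inner_le v cstar)
      rintro _ ⟨k, hk, rfl⟩
      have hkM : k ≤ M := le_flagMax 𝔩 H hs (Finset.mem_coe.1 hk)
      have hPk : projL k v = 0 := projL_eq_zero (Submodule.orthogonal_le hkM hvM)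
      have hkfin : finrank ℝ k ≤ finrank ℝ M := Submodule.finrank_mono hkM
      show ⟪Apt k v, v⟫ ≤ cstar
      rw [Apt_apply, hPk, sub_zero, real_inner_smul_left, hvv, mul_one]
      apply inv_anti₀ hden
      have : (finrank ℝ ↥k : ℝ) ≤ (finrank ℝ ↥M : ℝ) := by exact_mod_cast hkfin
      linarith
    · intro y hy
      have h0 : y v = 0 := ((mem_disk_iff 𝔩 H hKtop).1 hy).2.2.2.1 v hvK
      show ⟪y v, v⟫ ≤ cstar
      rw [h0, inner_zero_left]
      exact hcsp.le
  intro hWmem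
  have hle := hsub hWmem
  have hWv : ⟪W v, v⟫ = ((finrank ℝ ↥K : ℝ) - (finrank ℝ ↥M : ℝ))⁻¹ := by
    have happ : W v = ((finrank ℝ ↥K : ℝ) - (finrank ℝ ↥M : ℝ))⁻¹ • (projL K v - projL M v) :=
      rfl
    rw [happ, projL_eq_self hvK, projL_eq_zero hvM, sub_zero, real_inner_smul_left, hvv,
      mul_one]
  have hgt : cstar < ((finrank ℝ ↥K : ℝ) - (finrank ℝ ↥M : ℝ))⁻¹ := by
    apply inv_strictAnti₀
    · rw [sub_pos]; exact_mod_cast hnMK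
    · have h1 : (finrank ℝ ↥K : ℝ) < (finrank ℝ L : ℝ) := by exact_mod_cast hnKL
      linarith
  rw [mem_setOf_eq, hWv] at hle
  linarith
lemma flagStep_erase_strict {s : Finset (Submodule ℝ L)} {K : Submodule ℝ L}
    (hs : IsFlag 𝔩 H s) (hK : K ∈ s) (hKM : K ≠ flagMax s) :
    ∃ W, W ∈ butterfly 𝔩 H s ∧ W ∉ butterfly 𝔩 H (s.erase K) := by
  set M := flagMax s with hM
  set t := s.erase K with htdef
  have hKltM : K < M := lt_of_le_of_ne (le_flagMax 𝔩 H hs hK) hKM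
  have hKtop : K ≠ ⊤ := hKltM.ne_top
  have hmax : flagMax t = M := flagMax_erase 𝔩 H hs hK hKM
  have hMmem_t : M ∈ t := Finset.mem_erase.2 ⟨fun h => hKM h.symm, flagMax_mem 𝔩 H hs⟩
  -- the largest member strictly below `K` (or `H`)
  set F : Finset (Submodule ℝ L) := insert H (t.filter (fun k => k < K)) with hF
  have hFchain : IsChain (· ≤ ·) (↑F : Set (Submodule ℝ L)) := by
    intro x hx y hy hxy
    simp only [hF, Finset.coe_insert, Set.mem_insert_iff, Finset.mem_coe,
      Finset.mem_filter] at hx hy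
    rcases hx with rfl | ⟨hx, -⟩
    · rcases hy with rfl | ⟨hy, -⟩
      · exact absurd rfl hxy
      · exact Or.inl (hs.2.2 y (Finset.mem_of_mem_erase hy)).2.le
    · rcases hy with rfl | ⟨hy, -⟩
      · exact Or.inr (hs.2.2 x (Finset.mem_of_mem_erase hx)).2.le
      · exact hs.2.1 (Finset.mem_coe.2 (Finset.mem_of_mem_erase hx))
          (Finset.mem_coe.2 (Finset.mem_of_mem_erase hy)) hxy
  have hFne : F.Nonempty := ⟨H, Finset.mem_insert_self _ _⟩
  obtain ⟨hKmF, hKmub⟩ := flagMax_spec hFne hFchain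
  set Km := flagMax F with hKm
  have hKmltK : Km < K := by
    rcases Finset.mem_insert.1 hKmF with h | h
    · rw [h]
      exact (hs.2.2 K hK).2
    · exact (Finset.mem_filter.1 h).2
  have hbelow : ∀ k ∈ t, k < K → k ≤ Km :=
    fun k hk hkK => hKmub k (Finset.mem_insert_of_mem (Finset.mem_filter.2 ⟨hk, hkK⟩))
  -- the smallest member strictly above `K`
  set Q := t.filter (fun k => K < k) with hQ
  have hMQ : M ∈ Q := Finset.mem_filter.2 ⟨hMmem_t, hKltM⟩
  obtain ⟨Kp, hKpQ, hKpmin⟩ := Set.Finite.exists_minimalFor id (↑Q : Set (Submodule ℝ L))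
    Q.finite_toSet ⟨M, by exact_mod_cast hMQ⟩
  have hKpQ' : Kp ∈ Q := by exact_mod_cast hKpQ
  have hKltKp : K < Kp := (Finset.mem_filter.1 hKpQ').2
  have hKpt : Kp ∈ t := (Finset.mem_filter.1 hKpQ').1
  have hKplb : ∀ k ∈ Q, Kp ≤ k := by
    intro k hk
    rcases eq_or_ne k Kp with rfl | hne
    · exact le_rfl
    have hcomp := hs.2.1 (Finset.mem_coe.2 (Finset.mem_of_mem_erase (Finset.mem_filter.1 hk).1))
        (Finset.mem_coe.2 (Finset.mem_of_mem_erase hKpt)) hne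
    rcases hcomp with h | h
    · exact hKpmin (by exact_mod_cast hk) h
    · exact h
  -- the separating vectors
  obtain ⟨v, hvK, hvKm, hvv⟩ := exists_unit_sub hKmltK
  obtain ⟨w, hwKp, hwK, hww⟩ := exists_unit_sub hKltKp
  have hvM : v ∈ M := hKltM.le hvK
  have hwM : w ∈ M := (le_flagMax 𝔩 H hs (Finset.mem_of_mem_erase hKpt)) hwKp
  have hdiskC : disk 𝔩 H M ⊆ {B : L →L[ℝ] L | ⟪B v, v⟫ = ⟪B w, w⟫} :=
    disk_subset_inner_eq 𝔩 H hvM hwM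
  have hsub : butterfly 𝔩 H t ⊆ {B : L →L[ℝ] L | ⟪B v, v⟫ = ⟪B w, w⟫} := by
    by_cases hcard : t.card = 1
    · rw [butterfly, if_pos hcard, hmax]; exact hdiskC
    rw [butterfly, if_neg hcard, hmax]
    refine join_subset (convex_inner_eq v w) ?_ hdiskC
    refine convexHull_min ?_ (convex_inner_eq v w)
    rintro _ ⟨k, hk, rfl⟩
    have hkt : k ∈ t := Finset.mem_of_mem_erase (Finset.mem_coe.1 hk)
    have hks : k ∈ s := Finset.mem_of_mem_erase hkt
    have hkK : k ≠ K := Finset.ne_of_mem_erase hkt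
    show ⟪Apt k v, v⟫ = ⟪Apt k w, w⟫
    rcases hs.2.1 (Finset.mem_coe.2 hks) (Finset.mem_coe.2 hK) hkK with h | h
    · have hkKm : k ≤ Km := hbelow k hkt (lt_of_le_of_ne h hkK)
      have hPv : projL k v = 0 := projL_eq_zero (Submodule.orthogonal_le hkKm hvKm)
      have hPw : projL k w = 0 := projL_eq_zero (Submodule.orthogonal_le h hwK)
      rw [Apt_apply k v, Apt_apply k w, hPv, hPw, sub_zero, sub_zero, real_inner_smul_left,
        real_inner_smul_left, hvv, hww]
    · have hKp_le : Kp ≤ k :=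
        hKplb k (Finset.mem_filter.2 ⟨hkt, lt_of_le_of_ne h (Ne.symm hkK)⟩)
      have hPv : projL k v = v := projL_eq_self (h hvK)
      have hPw : projL k w = w := projL_eq_self (hKp_le hwKp)
      rw [Apt_apply k v, Apt_apply k w, hPv, hPw, sub_self, sub_self, smul_zero,
        inner_zero_left, inner_zero_left]
  refine ⟨Apt K, Apt_mem_butterfly_of_ne 𝔩 H hs hK hKM, ?_⟩
  intro hmem
  have h0 := hsub hmem
  rw [mem_setOf_eq] at h0
  have hPv : projL K v = v := projL_eq_self hvK
  have hPw : projL K w = 0 := projL_eq_zero hwK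
  rw [Apt_apply K v, Apt_apply K w, hPv, hPw, sub_self, smul_zero, inner_zero_left, sub_zero,
    real_inner_smul_left, hww, mul_one] at h0
  have hnK : finrank ℝ K < finrank ℝ L := Submodule.finrank_lt hKtop
  have hpos : (0:ℝ) < ((finrank ℝ L : ℝ) - (finrank ℝ ↥K : ℝ))⁻¹ := by
    apply inv_pos.2; rw [sub_pos]; exact_mod_cast hnK
  linarith [h0]

-- ### assembling the steps

lemma flagStep_subset {s t : Finset (Submodule ℝ L)} (h : FlagStep 𝔩 H s t) :
    butterfly 𝔩 H t ⊆ butterfly 𝔩 H s := by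
  obtain ⟨hs, ht, hcase⟩ := h
  rcases hcase with ⟨K, hK, rfl⟩ | ⟨K, hKmem, hKM, rfl⟩
  · exact flagStep_insert_subset 𝔩 H hs hK
  · exact flagStep_erase_subset 𝔩 H hs hKmem hKM

lemma flagStep_strict {s t : Finset (Submodule ℝ L)} (h : FlagStep 𝔩 H s t)
    (htop : flagMax t ≠ ⊤) :
    ∃ W, W ∈ butterfly 𝔩 H s ∧ W ∉ butterfly 𝔩 H t := by
  obtain ⟨hs, ht, hcase⟩ := h
  rcases hcase with ⟨K, hK, rfl⟩ | ⟨K, hKmem, hKM, rfl⟩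
  · have hKtop : K ≠ ⊤ := by rw [flagMax_insert 𝔩 H hs hK] at htop; exact htop
    exact flagStep_insert_strict 𝔩 H hs ht hK hKtop
  · exact flagStep_erase_strict 𝔩 H hs hKmem hKM

lemma flagLE_subset {s t : Finset (Submodule ℝ L)} (h : FlagLE 𝔩 H s t) :
    butterfly 𝔩 H t ⊆ butterfly 𝔩 H s := by
  have h' : Relation.ReflTransGen (FlagStep 𝔩 H) s t := h
  clear h
  induction h' with
  | refl => exact subset_rfl
  | tail hab hbc ih => exact (flagStep_subset 𝔩 H hbc).trans ih

lemma flagLE_strict {s t : Finset (Submodule ℝ L)} (h : FlagLE 𝔩 H s t)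
    (htop : flagMax t ≠ ⊤) (hne : s ≠ t) :
    ∃ W, W ∈ butterfly 𝔩 H s ∧ W ∉ butterfly 𝔩 H t := by
  have h' : Relation.ReflTransGen (FlagStep 𝔩 H) s t := h
  clear h
  revert hne
  induction h' using Relation.ReflTransGen.head_induction_on with
  | refl => intro hne; exact absurd rfl hne
  | @head a c step rest ih =>
    intro _
    by_cases hc : flagMax c = ⊤
    · have hct : c ≠ t := fun h => htop (h ▸ hc)
      obtain ⟨W, hW1, hW2⟩ := ih hct
      exact ⟨W, flagStep_subset 𝔩 H step hW1, hW2⟩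
    · obtain ⟨W, hW1, hW2⟩ := flagStep_strict 𝔩 H step hc
      exact ⟨W, hW1, fun hmem => hW2 (flagLE_subset 𝔩 H rest hmem)⟩

-- STATEMENT 6
theorem butterfly_subset_of_lt
    (hH : IsLieSub 𝔩 H) (hprop : H ≠ ⊤)
    (s t : Finset (Submodule ℝ L)) (hs : IsFlag 𝔩 H s) (ht : IsFlag 𝔩 H t)
    (hle : FlagLE 𝔩 H s t) (hne : s ≠ t) :
    butterfly 𝔩 H t ⊆ butterfly 𝔩 H s ∧
      (flagMax t ≠ ⊤ → butterfly 𝔩 H t ⊂ butterfly 𝔩 H s) := by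
  refine ⟨flagLE_subset 𝔩 H hle, fun htop => ?_⟩
  obtain ⟨W, hW1, hW2⟩ := flagLE_strict 𝔩 H hle htop hne
  refine HasSubset.Subset.ssubset_of_ne (flagLE_subset 𝔩 H hle) ?_
  intro heq
  exact hW2 (heq.symm ▸ hW1)
end
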